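/- Let G be a finite simple graph on n ≥ 2 vertices, let ε > 0 and let k > 0 be a real number. Consider the process that starts from G and, in each round, simultaneously removes from the current graph all vertices whose degree in the current graph is at most (2+ε)k. Then after at most ⌈log_{(2+ε)/2}(n)⌉ rounds, every vertex of G whose coreness (in the original graph G) is at most k has been removed. -/

import Mathlib

open scoped Classical

/-- The coreness of `v`: the largest `k` such that `v` belongs to an (induced) subgraph of `G`
of minimum degree at least `k`. -/
noncomputable def coreness {V : Type} [Fintype V] [DecidableEq V] (G : SimpleGraph V)
    [DecidableRel G.Adj] (v : V) : ℕ :=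
  sSup {k : ℕ | ∃ s : Finset V, v ∈ s ∧ ∀ u ∈ s, k ≤ (s.filter (G.Adj u)).card}

/-- One round of peeling with threshold `τ`: from the current vertex set `S`, simultaneously
remove all vertices whose degree in the subgraph induced by `S` is at most `τ`. -/
noncomputable def peelStep {V : Type} [Fintype V] (G : SimpleGraph V) (τ : ℝ)
    (S : Finset V) : Finset V :=
  S.filter (fun v => τ < ((S.filter (fun w => G.Adj v w)).card : ℝ))

section Aux
variable {V : Type} [Fintype V] [DecidableEq V] (G : SimpleGraph V) [DecidableRel G.Adj]

lemma coreness_bddAbove (v : V) :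
    BddAbove {k : ℕ | ∃ s : Finset V, v ∈ s ∧ ∀ u ∈ s, k ≤ (s.filter (G.Adj u)).card} := by
  refine ⟨Fintype.card V, fun m hm => ?_⟩
  obtain ⟨s, hv, h⟩ := hm
  calc m ≤ (s.filter (G.Adj v)).card := h v hv
    _ ≤ s.card := Finset.card_filter_le _ _
    _ ≤ Fintype.card V := s.card_le_univ

lemma le_coreness {v : V} {m : ℕ} {s : Finset V} (hv : v ∈ s)
    (h : ∀ u ∈ s, m ≤ (s.filter (G.Adj u)).card) : m ≤ coreness G v :=
  le_csSup (coreness_bddAbove G v) ⟨s, hv, h⟩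

lemma coreness_witness (v : V) :
    ∃ s : Finset V, v ∈ s ∧ ∀ u ∈ s, coreness G v ≤ (s.filter (G.Adj u)).card := by
  have hne : {k : ℕ | ∃ s : Finset V, v ∈ s ∧ ∀ u ∈ s, k ≤ (s.filter (G.Adj u)).card}.Nonempty :=
    ⟨0, {v}, Finset.mem_singleton_self v, fun u _ => Nat.zero_le _⟩
  exact Nat.sSup_mem hne (coreness_bddAbove G v)

/-- The set of vertices of coreness at least `f+1`. -/
noncomputable def Hset (f : ℕ) : Finset V :=
  Finset.univ.filter (fun u => f + 1 ≤ coreness G u)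

lemma Hset_deg (f : ℕ) : ∀ u ∈ Hset G f, f + 1 ≤ ((Hset G f).filter (G.Adj u)).card := by
  intro u hu
  have hc : f + 1 ≤ coreness G u := (Finset.mem_filter.mp hu).2
  obtain ⟨s, hus, hs⟩ := coreness_witness G u
  have hsub : s ⊆ Hset G f := by
    intro w hw
    refine Finset.mem_filter.mpr ⟨Finset.mem_univ _, ?_⟩
    exact le_trans hc (le_coreness G hw hs)
  calc f + 1 ≤ (s.filter (G.Adj u)).card := le_trans hc (hs u hus)
    _ ≤ ((Hset G f).filter (G.Adj u)).card :=
        Finset.card_le_card (Finset.filter_subset_filter _ hsub)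

lemma exists_small_deg (f : ℕ) (B : Finset V) (hB : ∀ v ∈ B, coreness G v ≤ f)
    (hne : B.Nonempty) : ∃ v ∈ B, ((B ∪ Hset G f).filter (G.Adj v)).card ≤ f := by
  by_contra hcon
  push_neg at hcon
  have hall : ∀ u ∈ B ∪ Hset G f, f + 1 ≤ ((B ∪ Hset G f).filter (G.Adj u)).card := by
    intro u hu
    rcases Finset.mem_union.mp hu with hu' | hu'
    · exact hcon u hu'
    · calc f + 1 ≤ ((Hset G f).filter (G.Adj u)).card := Hset_deg G f u hu'
        _ ≤ ((B ∪ Hset G f).filter (G.Adj u)).card :=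
            Finset.card_le_card (Finset.filter_subset_filter _ Finset.subset_union_right)
  obtain ⟨v, hv⟩ := hne
  have := le_coreness G (Finset.mem_union_left _ hv) hall
  have := hB v hv
  omega

lemma sum_deg_le (f : ℕ) (B : Finset V) (hB : ∀ v ∈ B, coreness G v ≤ f) :
    ∑ u ∈ B, ((B ∪ Hset G f).filter (G.Adj u)).card ≤ 2 * f * B.card := by
  induction B using Finset.strongInduction with
  | _ B ih =>
    rcases B.eq_empty_or_nonempty with rfl | hne
    · simp
    · obtain ⟨v, hvB, hdv⟩ := exists_small_deg G f B hB hne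
      set B' := B.erase v with hB'
      have hss : B' ⊂ B := Finset.erase_ssubset hvB
      have hB'low : ∀ u ∈ B', coreness G u ≤ f := fun u hu => hB u (Finset.mem_of_mem_erase hu)
      have hins : B ∪ Hset G f ⊆ insert v (B' ∪ Hset G f) := by
        intro x hx
        rcases Finset.mem_union.mp hx with hx' | hx'
        · rcases eq_or_ne x v with rfl | hxv
          · exact Finset.mem_insert_self _ _
          · exact Finset.mem_insert_of_mem (Finset.mem_union_left _ (Finset.mem_erase.mpr ⟨hxv, hx'⟩))
        · exact Finset.mem_insert_of_mem (Finset.mem_union_right _ hx')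
      have hpt : ∀ u ∈ B', ((B ∪ Hset G f).filter (G.Adj u)).card ≤
          ((B' ∪ Hset G f).filter (G.Adj u)).card + (if G.Adj u v then 1 else 0) := by
        intro u _
        have h1 : ((B ∪ Hset G f).filter (G.Adj u)).card ≤
            ((insert v (B' ∪ Hset G f)).filter (G.Adj u)).card :=
          Finset.card_le_card (Finset.filter_subset_filter _ hins)
        rw [Finset.filter_insert] at h1
        by_cases hadj : G.Adj u v
        · simp only [hadj, if_true] at h1 ⊢
          exact le_trans h1 (le_trans (Finset.card_insert_le _ _) (by omega))
        · simp only [hadj, if_false] at h1 ⊢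
          omega
      have hsum_ite : ∑ u ∈ B', (if G.Adj u v then 1 else 0) ≤ f := by
        have heq : ∑ u ∈ B', (if G.Adj u v then 1 else 0)
            = (B'.filter (fun u => G.Adj u v)).card := by
          rw [Finset.card_filter]
        rw [heq]
        have hsub2 : B'.filter (fun u => G.Adj u v) ⊆ (B ∪ Hset G f).filter (G.Adj v) := by
          intro x hx
          obtain ⟨hx1, hx2⟩ := Finset.mem_filter.mp hx
          exact Finset.mem_filter.mpr ⟨Finset.mem_union_left _ (Finset.mem_of_mem_erase hx1),
            G.adj_symm hx2⟩
        exact le_trans (Finset.card_le_card hsub2) hdv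
      have hsplit : ∑ u ∈ B, ((B ∪ Hset G f).filter (G.Adj u)).card =
          ((B ∪ Hset G f).filter (G.Adj v)).card
            + ∑ u ∈ B', ((B ∪ Hset G f).filter (G.Adj u)).card :=
        (Finset.add_sum_erase _ _ hvB).symm
      have hcard : B'.card + 1 = B.card := Finset.card_erase_add_one hvB
      calc ∑ u ∈ B, ((B ∪ Hset G f).filter (G.Adj u)).card
          = ((B ∪ Hset G f).filter (G.Adj v)).card
              + ∑ u ∈ B', ((B ∪ Hset G f).filter (G.Adj u)).card := hsplit
        _ ≤ f + ∑ u ∈ B', (((B' ∪ Hset G f).filter (G.Adj u)).card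
              + (if G.Adj u v then 1 else 0)) :=
            Nat.add_le_add hdv (Finset.sum_le_sum hpt)
        _ = f + (∑ u ∈ B', ((B' ∪ Hset G f).filter (G.Adj u)).card
              + ∑ u ∈ B', (if G.Adj u v then 1 else 0)) := by rw [Finset.sum_add_distrib]
        _ ≤ f + (2 * f * B'.card + f) :=
            Nat.add_le_add_left (Nat.add_le_add (ih B' hss hB'low) hsum_ite) _
        _ ≤ 2 * f * B.card := by
            rw [hcard.symm]; ring_nf; omega

end Aux

/-- Let `G` have `n ≥ 2` vertices, `ε > 0`, `k > 0`.  Starting from `G` and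
repeatedly (simultaneously) removing all vertices of current degree at most `(2+ε)k`, after at
most `⌈log_{(2+ε)/2}(n)⌉` rounds every vertex of coreness at most `k` has been removed. -/
theorem peeling_removes_low_coreness
    {V : Type} [Fintype V] [DecidableEq V] (G : SimpleGraph V) [DecidableRel G.Adj]
    (hn : 2 ≤ Fintype.card V) (ε k : ℝ) (hε : 0 < ε) (hk : 0 < k) :
    ∀ v : V, (coreness G v : ℝ) ≤ k →
      v ∉ (peelStep G ((2 + ε) * k))^[⌈Real.logb ((2 + ε) / 2) (Fintype.card V)⌉₊]
            Finset.univ := by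
  intro v hv hmem
  set n : ℕ := Fintype.card V with hn'
  have hnR : (2:ℝ) ≤ (n:ℝ) := by exact_mod_cast hn
  set b : ℝ := (2 + ε) / 2 with hbdef
  set τ : ℝ := (2 + ε) * k with hτdef
  set f : ℕ := ⌊k⌋₊ with hfdef
  set T : ℕ := ⌈Real.logb b (n:ℝ)⌉₊ with hTdef
  set S : ℕ → Finset V := fun t => (peelStep G τ)^[t] (Finset.univ : Finset V) with hSdef
  set B : ℕ → Finset V := fun t => (S t).filter (fun u => (coreness G u : ℝ) ≤ k) with hBdef
  have hb1 : (1:ℝ) < b := by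
    rw [hbdef, lt_div_iff₀ (by norm_num : (0:ℝ) < 2)]; linarith
  have hτpos : 0 < τ := by rw [hτdef]; exact mul_pos (by linarith) hk
  have hεk : (0:ℝ) < 2 + ε := by linarith
  -- membership description of S (t+1)
  have hmemS : ∀ t u, u ∈ S (t+1) ↔
      u ∈ S t ∧ τ < (((S t).filter (G.Adj u)).card : ℝ) := by
    intro t u
    have h := Function.iterate_succ_apply' (peelStep G τ) t (Finset.univ : Finset V)
    rw [hSdef]
    simp only [h, peelStep, Finset.mem_filter, Finset.filter_congr_decidable]
    congr!
  have hSS : ∀ t, S (t+1) ⊆ S t := fun t u hu => ((hmemS t u).mp hu).1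
  have hBB : ∀ t, B (t+1) ⊆ B t := by
    intro t
    rw [hBdef]
    exact Finset.filter_subset_filter _ (hSS t)
  have hlowB : ∀ t, ∀ u ∈ B t, coreness G u ≤ f := by
    intro t u hu
    exact Nat.le_floor (Finset.mem_filter.mp hu).2
  have hSsubBH : ∀ t, S t ⊆ B t ∪ Hset G f := by
    intro t u hu
    by_cases hc : (coreness G u : ℝ) ≤ k
    · exact Finset.mem_union_left _ (Finset.mem_filter.mpr ⟨hu, hc⟩)
    · refine Finset.mem_union_right _ (Finset.mem_filter.mpr ⟨Finset.mem_univ _, ?_⟩)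
      push_neg at hc
      have h1 : (f:ℝ) ≤ k := Nat.floor_le hk.le
      have : (f:ℝ) < (coreness G u : ℝ) := lt_of_le_of_lt h1 hc
      exact_mod_cast this
  have hfk : (f:ℝ) ≤ k := Nat.floor_le hk.le
  -- one round contraction
  set r : ℝ := 2 / (2 + ε) with hrdef
  have hrpos : 0 < r := by rw [hrdef]; positivity
  have hstep : ∀ t, (B (t+1)).Nonempty →
      ((B (t+1)).card : ℝ) < r * ((B t).card : ℝ) := by
    intro t hne
    have h1 : ∀ u ∈ B (t+1), τ < (((B t ∪ Hset G f).filter (G.Adj u)).card : ℝ) := by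
      intro u hu
      have hu' : u ∈ S (t+1) := (Finset.mem_filter.mp hu).1
      have h2 := ((hmemS t u).mp hu').2
      refine lt_of_lt_of_le h2 ?_
      have := Finset.card_le_card (Finset.filter_subset_filter (G.Adj u) (hSsubBH t))
      exact_mod_cast this
    have hsum1 : ((B (t+1)).card : ℝ) * τ
        < ∑ u ∈ B (t+1), (((B t ∪ Hset G f).filter (G.Adj u)).card : ℝ) := by
      have := Finset.sum_lt_sum_of_nonempty hne h1
      simpa [Finset.sum_const, nsmul_eq_mul] using this
    have hsum2 : ∑ u ∈ B (t+1), (((B t ∪ Hset G f).filter (G.Adj u)).card : ℝ)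
        ≤ ∑ u ∈ B t, (((B t ∪ Hset G f).filter (G.Adj u)).card : ℝ) :=
      Finset.sum_le_sum_of_subset_of_nonneg (hBB t) (by intros; positivity)
    have hsum3 : ∑ u ∈ B t, (((B t ∪ Hset G f).filter (G.Adj u)).card : ℝ)
        ≤ 2 * (f:ℝ) * ((B t).card : ℝ) := by
      have := sum_deg_le G f (B t) (hlowB t)
      exact_mod_cast this
    have hcongr : ((B (t+1)).card : ℝ) * τ < 2 * k * ((B t).card : ℝ) := by
      have hBtnonneg : (0:ℝ) ≤ ((B t).card : ℝ) := by positivity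
      nlinarith
    rw [hrdef, show 2 / (2+ε) * ((B t).card : ℝ) = (2 * k * ((B t).card:ℝ)) / ((2+ε)*k) by
      field_simp]
    have hpos : (0:ℝ) < (2+ε)*k := mul_pos (by linarith) hk
    exact (lt_div_iff₀ hpos).mpr hcongr
  -- iterate the contraction
  have hB0 : ((B 0).card : ℝ) ≤ (n:ℝ) := by
    have h1 : (B 0).card ≤ (S 0).card := Finset.card_filter_le _ _
    have h2 : S 0 = (Finset.univ : Finset V) := rfl
    have : (B 0).card ≤ n := by
      rw [h2] at h1; simpa [Finset.card_univ] using h1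
    exact_mod_cast this
  have key : ∀ t, (B (t+1)).Nonempty → ((B (t+1)).card : ℝ) < r^(t+1) * (n:ℝ) := by
    intro t
    induction t with
    | zero =>
      intro h
      calc ((B 1).card : ℝ) < r * ((B 0).card : ℝ) := hstep 0 h
        _ ≤ r * (n:ℝ) := by nlinarith
        _ = r^1 * (n:ℝ) := by ring
    | succ t ih =>
      intro h
      have h' : (B (t+1)).Nonempty := Finset.Nonempty.mono (hBB (t+1)) h
      calc ((B (t+2)).card : ℝ) < r * ((B (t+1)).card : ℝ) := hstep (t+1) h
        _ ≤ r * (r^(t+1) * (n:ℝ)) := by nlinarith [ih h']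
        _ = r^(t+2) * (n:ℝ) := by ring
  -- conclude
  have hvB : v ∈ B T := Finset.mem_filter.mpr ⟨hmem, hv⟩
  have hn1 : (1:ℝ) < (n:ℝ) := by linarith
  have hTpos : 0 < T := by
    rw [hTdef]
    exact Nat.ceil_pos.mpr (Real.logb_pos hb1 hn1)
  obtain ⟨t, ht⟩ := Nat.exists_eq_succ_of_ne_zero hTpos.ne'
  have hBTne : (B T).Nonempty := ⟨v, hvB⟩
  have hlt : ((B T).card : ℝ) < r^T * (n:ℝ) := by
    rw [ht] at hBTne ⊢
    exact key t hBTne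
  have hone : (1:ℝ) ≤ ((B T).card : ℝ) := by
    exact_mod_cast Nat.one_le_iff_ne_zero.mpr (Finset.card_ne_zero_of_mem hvB)
  -- r^T * n ≤ 1
  have hbpos : (0:ℝ) < b := lt_trans zero_lt_one hb1
  have hnpos : (0:ℝ) < (n:ℝ) := by linarith
  have hlogle : Real.logb b (n:ℝ) ≤ (T:ℝ) := by
    rw [hTdef]; exact Nat.le_ceil _
  have hnb : (n:ℝ) ≤ b ^ T := by
    calc (n:ℝ) = b ^ (Real.logb b (n:ℝ)) := (Real.rpow_logb hbpos (ne_of_gt hb1) hnpos).symm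
      _ ≤ b ^ ((T:ℕ):ℝ) := Real.rpow_le_rpow_of_exponent_le hb1.le hlogle
      _ = b ^ (T:ℕ) := Real.rpow_natCast b T
  have hrb : r = b⁻¹ := by rw [hrdef, hbdef, inv_div]
  have hfinal : r^T * (n:ℝ) ≤ 1 := by
    rw [hrb, inv_pow]
    have hbT : (0:ℝ) < b ^ T := pow_pos hbpos T
    rw [inv_mul_le_iff₀ hbT, mul_one]
    exact hnb
  linarith
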